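/- Let a, b be coprime positive integers with prime factorizations a = p₁^{α₁}···p_s^{α_s} and b = q₁^{β₁}···q_t^{β_t}, and let g = gcd(b, α₁,...,α_s, β₁,...,β_t). Then the minimal polynomial over ℤ of the real number (a/b)^{a/b} is b^{a/g} X^{b/g} − a^{a/g}; in particular, (a/b)^{a/b} has degree b/g over ℚ. -/

import Mathlib

open Polynomial

theorem aux_nat (a b g : ℕ) (ha : 0 < a) (hb : 0 < b) (hab : Nat.Coprime a b)
    (hg : g = Nat.gcd b (Nat.gcd
      (a.factorization.support.gcd fun p => a.factorization p)
      (b.factorization.support.gcd fun p => b.factorization p)))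
    (p : ℕ) (hp : p.Prime) (hpn : p ∣ b / g)
    (m k : ℕ) (hm : m ^ (p * g) = a ^ a) (hk : k ^ (p * g) = b ^ a) : False := by
  have hg0 : 0 < g := hg ▸ Nat.gcd_pos_of_pos_left _ hb
  have hgb : g ∣ b := hg ▸ Nat.gcd_dvd_left _ _
  have hpgb : p * g ∣ b := by
    obtain ⟨c, hc⟩ := hgb
    subst hc
    rw [Nat.mul_div_cancel_left _ hg0] at hpn
    obtain ⟨e, he⟩ := hpn
    exact ⟨e, by rw [he]; ring⟩
  have hcop : Nat.Coprime a (p * g) := by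
    have h1 : Nat.Coprime a p := Nat.Coprime.coprime_dvd_right (dvd_trans (dvd_trans hpn (Nat.div_dvd_of_dvd hgb)) dvd_rfl) hab
    exact Nat.Coprime.mul_right h1 (Nat.Coprime.coprime_dvd_right hgb hab)
  -- exponents
  have hfa : ∀ q : ℕ, p * g ∣ a.factorization q := by
    intro q
    have := congrArg (fun n => n.factorization q) hm
    simp only [Nat.factorization_pow, Finsupp.smul_apply, smul_eq_mul] at this
    have hdvd : p * g ∣ a * a.factorization q := ⟨m.factorization q, by omega⟩
    exact (Nat.Coprime.dvd_of_dvd_mul_left (Nat.Coprime.symm hcop) hdvd)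
  have hfb : ∀ q : ℕ, p * g ∣ b.factorization q := by
    intro q
    have := congrArg (fun n => n.factorization q) hk
    simp only [Nat.factorization_pow, Finsupp.smul_apply, smul_eq_mul] at this
    have hdvd : p * g ∣ a * b.factorization q := ⟨k.factorization q, by omega⟩
    exact (Nat.Coprime.dvd_of_dvd_mul_left (Nat.Coprime.symm hcop) hdvd)
  have : p * g ∣ g := by
    have h2 := Nat.dvd_gcd hpgb (Nat.dvd_gcd (Finset.dvd_gcd (s := a.factorization.support) (f := fun q => a.factorization q) fun q _ => hfa q) (Finset.dvd_gcd (s := b.factorization.support) (f := fun q => b.factorization q) fun q _ => hfb q))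
    rwa [← hg] at h2
  have := Nat.le_of_dvd hg0 this
  nlinarith [hp.two_le]

theorem aux_q (a b g : ℕ) (ha : 0 < a) (hb : 0 < b) (hab : Nat.Coprime a b)
    (hg : g = Nat.gcd b (Nat.gcd
      (a.factorization.support.gcd fun p => a.factorization p)
      (b.factorization.support.gcd fun p => b.factorization p)))
    (a' b' : ℕ) (ha' : a' ^ g = a ^ a) (hb' : b' ^ g = b ^ a)
    (hnat : ∀ p : ℕ, p.Prime → p ∣ b / g → ∀ m k : ℕ,
        m ^ (p * g) = a ^ a → k ^ (p * g) = b ^ a → False)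
    (p : ℕ) (hp : p.Prime) (hpn : p ∣ b / g) (t : ℚ) (ht : t ^ p = (a' : ℚ) / (b' : ℚ)) :
    False := by
  have hg0 : 0 < g := hg ▸ Nat.gcd_pos_of_pos_left _ hb
  have ha'0 : 0 < a' := by
    rcases Nat.eq_zero_or_pos a' with h | h
    · exfalso; rw [h, zero_pow hg0.ne'] at ha'; exact (pow_pos ha a).ne' ha'.symm
    · exact h
  have hb'0 : 0 < b' := by
    rcases Nat.eq_zero_or_pos b' with h | h
    · exfalso; rw [h, zero_pow hg0.ne'] at hb'; exact (pow_pos hb a).ne' hb'.symm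
    · exact h
  have hcop' : Nat.Coprime a' b' := by
    have h2 : Nat.Coprime (a' ^ g) (b' ^ g) := by
      rw [ha', hb']; exact Nat.Coprime.pow a a hab
    exact Nat.Coprime.coprime_dvd_left (dvd_pow_self a' hg0.ne')
      (Nat.Coprime.coprime_dvd_right (dvd_pow_self b' hg0.ne') h2)
  have hc0 : (0:ℚ) < (a' : ℚ) / (b' : ℚ) := by positivity
  have habs : |t| ^ p = (a' : ℚ) / (b' : ℚ) := by
    rw [← abs_pow, ht, abs_of_pos hc0]
  set s := |t| with hs
  have hs0 : 0 < s := by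
    rcases lt_or_eq_of_le (abs_nonneg t) with h | h
    · exact h
    · exfalso
      rw [hs, ← h, zero_pow hp.ne_zero] at habs
      exact hc0.ne habs
  set m := s.num.toNat with hm
  set k := s.den with hk
  have hmz : (m : ℤ) = s.num := Int.toNat_of_nonneg (Rat.num_pos.mpr hs0).le
  have hmk : (m : ℚ) / (k : ℚ) = s := by
    have hnum : (m : ℚ) = (s.num : ℚ) := by exact_mod_cast congrArg (fun z : ℤ => (z : ℚ)) hmz
    rw [hnum, hk]; exact Rat.num_div_den s
  have hk0 : 0 < k := s.pos
  have hcopmk : Nat.Coprime m k := by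
    have h3 := s.reduced
    have h4 : s.num.natAbs = m := by
      have h5 := (Rat.num_pos.mpr hs0).le
      omega
    rwa [h4] at h3
  -- cross-multiplied identity in ℕ
  have hcross : m ^ p * b' = a' * k ^ p := by
    have h1 : ((m : ℚ) / k) ^ p = (a' : ℚ) / b' := by rw [hmk]; exact habs
    rw [div_pow, div_eq_div_iff (by positivity) (by positivity)] at h1
    exact_mod_cast h1
  have hkb : k ^ p = b' := by
    have h1 : k ^ p ∣ b' := by
      have hd : k ^ p ∣ m ^ p * b' := ⟨a', by rw [hcross]; ring⟩
      exact (Nat.Coprime.dvd_of_dvd_mul_left (Nat.Coprime.pow p p (Nat.Coprime.symm hcopmk)) hd)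
    have h2 : b' ∣ k ^ p := by
      have : b' ∣ a' * k ^ p := ⟨m ^ p, by rw [← hcross]; ring⟩
      exact (Nat.Coprime.dvd_of_dvd_mul_left (Nat.Coprime.symm hcop') this)
    exact Nat.dvd_antisymm h1 h2
  have hma : m ^ p = a' := by
    have := hcross
    rw [hkb] at this
    exact Nat.eq_of_mul_eq_mul_right hb'0 this
  exact hnat p hp hpn m k
    (by rw [pow_mul, hma, ha']) (by rw [pow_mul, hkb, hb'])

theorem aux_minpoly (x : ℝ) (hx : 0 < x) (n : ℕ) (hn : 0 < n) (c : ℚ) (hc : 0 < c)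
    (hxc : x ^ n = (c : ℝ))
    (hpth : ∀ p : ℕ, p.Prime → p ∣ n → ∀ t : ℚ, t ^ p ≠ c) :
    minpoly ℚ x = X ^ n - C c := by
  have hP : (X ^ n - C c : ℚ[X]).Monic := monic_X_pow_sub_C c hn.ne'
  have hroot : Polynomial.aeval x (X ^ n - C c : ℚ[X]) = 0 := by
    simp [hxc]
  have hint : IsIntegral ℚ x := ⟨X ^ n - C c, hP, by simpa [Polynomial.aeval_def] using hroot⟩
  have hdvd : minpoly ℚ x ∣ X ^ n - C c := minpoly.dvd ℚ x hroot
  set h := minpoly ℚ x with hh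
  set d := h.natDegree with hd
  have hd0 : 0 < d := minpoly.natDegree_pos hint
  have hdn : d ≤ n := by
    have := Polynomial.natDegree_le_of_dvd hdvd hP.ne_zero
    rwa [Polynomial.natDegree_X_pow_sub_C] at this
  have hhm : h.Monic := minpoly.monic hint
  -- step: x ^ d is rational
  obtain ⟨q, hq0, hq⟩ : ∃ q : ℚ, 0 < q ∧ x ^ d = (q : ℝ) := by
    set φ := algebraMap ℚ ℂ with hφ
    set H := h.map φ with hH
    have hHsp : Splits H := IsAlgClosed.splits H
    have hHm : H.Monic := hhm.map φ
    have hcard : Multiset.card H.roots = d := by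
      rw [hd, ← Polynomial.natDegree_map φ, hHsp.natDegree_eq_card_roots]
    have habs : ∀ z ∈ H.roots, ‖z‖ = x := by
      intro z hz
      have hz0 : H.eval z = 0 := (Polynomial.mem_roots hHm.ne_zero).mp hz
      have hzP : z ^ n = ((c : ℝ) : ℂ) := by
        have hdvd' : H ∣ (X ^ n - C c).map φ := Polynomial.map_dvd φ hdvd
        have : ((X ^ n - C c).map φ).eval z = 0 := by
          obtain ⟨k, hk⟩ := hdvd'
          rw [hk, Polynomial.eval_mul, hz0, zero_mul]
        simpa [sub_eq_zero, Rat.cast_def] using this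
      have h6 : ‖z‖ ^ n = x ^ n := by
        rw [← norm_pow, hzP, Complex.norm_real, Real.norm_eq_abs, abs_of_pos (by positivity : (0:ℝ) < (c:ℝ)), hxc]
      exact (pow_left_inj₀ (by positivity) hx.le hn.ne').mp h6
    have hc0 : H.coeff 0 = (-1) ^ d * H.roots.prod := by
      have := hHsp.coeff_zero_eq_prod_roots_of_monic hHm
      rw [this, Polynomial.natDegree_map, ← hd]
    have habs0 : ‖H.coeff 0‖ = x ^ d := by
      have hmp : ‖H.roots.prod‖ = (H.roots.map (fun z => ‖z‖)).prod :=
        map_multiset_prod (normHom : ℂ →*₀ ℝ) H.roots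
      rw [hc0, norm_mul, norm_pow, norm_neg, norm_one, one_pow, one_mul, hmp]
      have hrep : Multiset.map (fun z => ‖z‖) H.roots = Multiset.replicate d x :=
        Multiset.eq_replicate.mpr ⟨by rw [Multiset.card_map, hcard], fun z hz => by
          obtain ⟨w, hw, rfl⟩ := Multiset.mem_map.mp hz
          exact habs w hw⟩
      rw [hrep, Multiset.prod_replicate]
    have hco : ‖H.coeff 0‖ = ((|h.coeff 0| : ℚ) : ℝ) := by
      rw [hH, Polynomial.coeff_map]
      rw [show φ (h.coeff 0) = (((h.coeff 0 : ℚ) : ℝ) : ℂ) by push_cast; rfl]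
      rw [Complex.norm_real, Real.norm_eq_abs]
      push_cast
      ring
    refine ⟨|h.coeff 0|, ?_, ?_⟩
    · rcases lt_or_eq_of_le (abs_nonneg (h.coeff 0)) with hgt | heq
      · exact hgt
      · exfalso
        rw [hco, ← heq] at habs0
        push_cast at habs0
        exact (pow_pos hx d).ne habs0
    · rw [← habs0, hco]
  -- gcd argument: x ^ gcd d n is rational
  set e := Nat.gcd d n with he
  have he0 : 0 < e := Nat.gcd_pos_of_pos_left _ hd0
  have hed : e ∣ d := Nat.gcd_dvd_left _ _
  have hen : e ∣ n := Nat.gcd_dvd_right _ _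
  set u := Nat.gcdA d n with hu
  set v := Nat.gcdB d n with hv
  set r : ℚ := q ^ u * c ^ v with hr
  have hxe : x ^ e = (r : ℝ) := by
    have h1 : x ^ (e : ℤ) = x ^ ((d : ℤ) * u + (n : ℤ) * v) := by
      rw [← Nat.gcd_eq_gcd_ab]
    have h2 : x ^ ((d : ℤ) * u + (n : ℤ) * v) = (x ^ (d : ℤ)) ^ u * (x ^ (n : ℤ)) ^ v := by
      rw [zpow_add₀ hx.ne', zpow_mul, zpow_mul]
    have h3 : (x ^ (d : ℤ)) ^ u * (x ^ (n : ℤ)) ^ v = ((q : ℝ)) ^ u * ((c : ℝ)) ^ v := by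
      rw [zpow_natCast, zpow_natCast, hq, hxc]
    have h4 : x ^ (e : ℤ) = ((q : ℝ)) ^ u * ((c : ℝ)) ^ v := by rw [h1, h2, h3]
    rw [zpow_natCast] at h4
    rw [h4, hr]
    push_cast
    ring
  have hdn' : d = n := by
    by_contra hne
    have hlt : d < n := lt_of_le_of_ne hdn hne
    have hel : e < n := lt_of_le_of_lt (Nat.le_of_dvd hd0 hed) hlt
    obtain ⟨m, hm⟩ := hen
    have hm1 : 1 < m := by
      rcases Nat.lt_or_ge m 2 with h' | h'
      · interval_cases m <;> omega
      · omega
    obtain ⟨p, hp, hpm⟩ := Nat.exists_prime_and_dvd (by omega : m ≠ 1)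
    have hpn : p ∣ n := hm ▸ Dvd.dvd.mul_left hpm e
    have hrm : r ^ m = c := by
      have hcast : ((r ^ m : ℚ) : ℝ) = ((c : ℚ) : ℝ) := by
        push_cast
        rw [← hxe, ← pow_mul, ← hm, hxc]
      exact_mod_cast hcast
    obtain ⟨w, hw⟩ := hpm
    exact hpth p hp hpn (r ^ w) (by rw [← pow_mul, mul_comm w p, ← hw, hrm])
  -- conclude
  obtain ⟨k, hk⟩ := hdvd
  have hk0 : k ≠ 0 := by
    intro h0
    rw [h0, mul_zero] at hk
    exact hP.ne_zero hk
  have hdeg : n = d + k.natDegree := by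
    have := congrArg Polynomial.natDegree hk
    rwa [Polynomial.natDegree_X_pow_sub_C, Polynomial.natDegree_mul hhm.ne_zero hk0] at this
  have hkdeg : k.natDegree = 0 := by omega
  have hklead : k.coeff 0 = 1 := by
    have hl := congrArg Polynomial.leadingCoeff hk
    rw [hP.leadingCoeff, Polynomial.leadingCoeff_mul, hhm.leadingCoeff, one_mul] at hl
    rw [Polynomial.leadingCoeff, hkdeg] at hl
    exact hl.symm
  have hkC : k = 1 := by
    rw [Polynomial.eq_C_of_natDegree_eq_zero hkdeg, hklead, map_one]
  rw [hk, hkC, mul_one]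

theorem aux_main (a b : ℕ) (ha : 0 < a) (hb : 0 < b) (hab : Nat.Coprime a b)
    (g : ℕ)
    (hg : g = Nat.gcd b (Nat.gcd
      (a.factorization.support.gcd fun p => a.factorization p)
      (b.factorization.support.gcd fun p => b.factorization p)))
    (a' b' : ℕ) (ha' : a' ^ g = a ^ a) (hb' : b' ^ g = b ^ a) :
    ((( a : ℝ) / b) ^ ((a : ℝ) / b)) ^ (b / g) = ((a' : ℚ) / (b' : ℚ) : ℚ) ∧
    (0 : ℚ) < (a' : ℚ) / (b' : ℚ) := by
  have hg0 : 0 < g := hg ▸ Nat.gcd_pos_of_pos_left _ hb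
  have hgb : g ∣ b := hg ▸ Nat.gcd_dvd_left _ _
  have hn0 : 0 < b / g := Nat.div_pos (Nat.le_of_dvd hb hgb) hg0
  have ha'0 : 0 < a' := by
    rcases Nat.eq_zero_or_pos a' with h | h
    · exfalso; rw [h, zero_pow hg0.ne'] at ha'; exact (pow_pos ha a).ne' ha'.symm
    · exact h
  have hb'0 : 0 < b' := by
    rcases Nat.eq_zero_or_pos b' with h | h
    · exfalso; rw [h, zero_pow hg0.ne'] at hb'; exact (pow_pos hb a).ne' hb'.symm
    · exact h
  have haR : (0:ℝ) < (a:ℝ) := by exact_mod_cast ha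
  have hbR : (0:ℝ) < (b:ℝ) := by exact_mod_cast hb
  have hgR : (0:ℝ) < (g:ℝ) := by exact_mod_cast hg0
  have hab0 : (0:ℝ) < (a:ℝ)/(b:ℝ) := by positivity
  constructor
  · have hnR : ((b / g : ℕ) : ℝ) = (b:ℝ)/(g:ℝ) := by
      rw [Nat.cast_div hgb (by exact_mod_cast hg0.ne' : (g:ℝ) ≠ 0)]
    have hxn : (((a:ℝ)/b) ^ ((a:ℝ)/b)) ^ (b/g) = ((a:ℝ)/b) ^ ((a:ℝ)/g) := by
      rw [← Real.rpow_natCast (((a:ℝ)/b) ^ ((a:ℝ)/b)) (b/g), ← Real.rpow_mul hab0.le]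
      congr 1
      rw [hnR]
      field_simp
    have hy : ((a:ℝ)/b) ^ ((a:ℝ)/g) = (a':ℝ)/(b':ℝ) := by
      have h1 : (((a:ℝ)/b) ^ ((a:ℝ)/g)) ^ g = ((a':ℝ)/(b':ℝ)) ^ g := by
        rw [← Real.rpow_natCast (((a:ℝ)/b) ^ ((a:ℝ)/g)) g, ← Real.rpow_mul hab0.le,
          div_mul_cancel₀ (a:ℝ) hgR.ne', Real.rpow_natCast, div_pow, div_pow]
        congr 1
        · exact_mod_cast congrArg (fun m : ℕ => (m:ℝ)) ha'.symm
        · exact_mod_cast congrArg (fun m : ℕ => (m:ℝ)) hb'.symm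
      exact (pow_left_inj₀ (Real.rpow_nonneg hab0.le _) (by positivity) hg0.ne').mp h1
    rw [hxn, hy]
    push_cast
    ring
  · positivity


open Polynomial in
theorem stmt_10 (a b : ℕ) (ha : 0 < a) (hb : 0 < b) (hab : Nat.Coprime a b)
    (g : ℕ)
    (hg : g = Nat.gcd b (Nat.gcd
      (a.factorization.support.gcd fun p => a.factorization p)
      (b.factorization.support.gcd fun p => b.factorization p)))
    (a' b' : ℕ) (ha' : a' ^ g = a ^ a) (hb' : b' ^ g = b ^ a) :
    Polynomial.aeval (((a : ℝ) / b) ^ ((a : ℝ) / b))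
        ((C (b' : ℤ)) * X ^ (b / g) - C (a' : ℤ)) = 0 ∧
    Irreducible ((C (b' : ℤ)) * X ^ (b / g) - C (a' : ℤ)) ∧
    (minpoly ℚ (((a : ℝ) / b) ^ ((a : ℝ) / b))).natDegree = b / g := by
  have hg0 : 0 < g := hg ▸ Nat.gcd_pos_of_pos_left _ hb
  have hgb : g ∣ b := hg ▸ Nat.gcd_dvd_left _ _
  have hn0 : 0 < b / g := Nat.div_pos (Nat.le_of_dvd hb hgb) hg0
  have ha'0 : 0 < a' := by
    rcases Nat.eq_zero_or_pos a' with h | h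
    · exfalso; rw [h, zero_pow hg0.ne'] at ha'; exact (pow_pos ha a).ne' ha'.symm
    · exact h
  have hb'0 : 0 < b' := by
    rcases Nat.eq_zero_or_pos b' with h | h
    · exfalso; rw [h, zero_pow hg0.ne'] at hb'; exact (pow_pos hb a).ne' hb'.symm
    · exact h
  have hcop' : Nat.Coprime a' b' := by
    have h2 : Nat.Coprime (a' ^ g) (b' ^ g) := by
      rw [ha', hb']; exact Nat.Coprime.pow a a hab
    exact Nat.Coprime.coprime_dvd_left (dvd_pow_self a' hg0.ne')
      (Nat.Coprime.coprime_dvd_right (dvd_pow_self b' hg0.ne') h2)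
  set c : ℚ := (a' : ℚ) / (b' : ℚ) with hcdef
  obtain ⟨hxc', hc0⟩ := aux_main a b ha hb hab g hg a' b' ha' hb'
  set x : ℝ := ((a : ℝ) / b) ^ ((a : ℝ) / b) with hxdef
  have hx0 : 0 < x := Real.rpow_pos_of_pos (by positivity) _
  have hxc : x ^ (b / g) = (c : ℝ) := hxc'
  have hpth : ∀ p : ℕ, p.Prime → p ∣ b / g → ∀ t : ℚ, t ^ p ≠ c := fun p hp hpd t ht =>
    aux_q a b g ha hb hab hg a' b' ha' hb'
      (fun p' hp' hpn m k hm hk => aux_nat a b g ha hb hab hg p' hp' hpn m k hm hk)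
      p hp hpd t ht
  have hmin : minpoly ℚ x = X ^ (b / g) - C c := aux_minpoly x hx0 (b / g) hn0 c hc0 hxc hpth
  have hroot : Polynomial.aeval x (X ^ (b / g) - C c : ℚ[X]) = 0 := by simp [hxc]
  have hint : IsIntegral ℚ x :=
    ⟨X ^ (b / g) - C c, monic_X_pow_sub_C c hn0.ne', by simpa [Polynomial.aeval_def] using hroot⟩
  have hirrQ : Irreducible (X ^ (b / g) - C c : ℚ[X]) := hmin ▸ minpoly.irreducible hint
  have hb'Q : ((b' : ℚ)) ≠ 0 := by positivity
  refine ⟨?_, ?_, ?_⟩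
  · have heval : (Polynomial.aeval x) ((C (b' : ℤ)) * X ^ (b / g) - C (a' : ℤ))
        = (b' : ℝ) * x ^ (b / g) - (a' : ℝ) := by
      simp
    rw [heval, hxc, hcdef]
    push_cast
    field_simp
    ring
  · have hprim : ((C (b' : ℤ)) * X ^ (b / g) - C (a' : ℤ)).IsPrimitive := by
      intro r hr
      rw [Polynomial.C_dvd_iff_dvd_coeff] at hr
      have h1 := hr (b / g)
      have h2 := hr 0
      have hcoN : (((C (b' : ℤ)) * X ^ (b / g) - C (a' : ℤ)) : ℤ[X]).coeff (b / g) = (b' : ℤ) := by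
        simp [Polynomial.coeff_X_pow, Polynomial.coeff_C, hn0.ne']
      have hco0 : (((C (b' : ℤ)) * X ^ (b / g) - C (a' : ℤ)) : ℤ[X]).coeff 0 = -(a' : ℤ) := by
        simp only [Polynomial.coeff_sub, Polynomial.coeff_C_mul, Polynomial.coeff_X_pow,
          Polynomial.coeff_C, if_pos rfl]
        rw [if_neg hn0.ne, mul_zero, zero_sub, if_pos trivial]
      rw [hcoN] at h1
      rw [hco0] at h2
      have hcopZ : IsCoprime ((a' : ℤ)) ((b' : ℤ)) := by
        rw [Int.isCoprime_iff_gcd_eq_one]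
        exact_mod_cast hcop'
      exact hcopZ.isUnit_of_dvd' (dvd_neg.mp h2) h1
    have hbc : (b' : ℚ) * c = (a' : ℚ) := by rw [hcdef]; field_simp
    have hmap : ((C (b' : ℤ)) * X ^ (b / g) - C (a' : ℤ)).map (Int.castRingHom ℚ)
        = C (b' : ℚ) * (X ^ (b / g) - C c) := by
      rw [Polynomial.map_sub, Polynomial.map_mul, Polynomial.map_pow, Polynomial.map_C,
        Polynomial.map_C, Polynomial.map_X, mul_sub, ← Polynomial.C_mul, hbc]
      push_cast
      rfl
    have hu : IsUnit (C (b' : ℚ)) := Polynomial.isUnit_C.mpr (isUnit_iff_ne_zero.mpr hb'Q)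
    have hassoc : Associated (X ^ (b / g) - C c : ℚ[X]) (C (b' : ℚ) * (X ^ (b / g) - C c)) :=
      ⟨hu.unit, by rw [IsUnit.unit_spec, mul_comm]⟩
    rw [Polynomial.IsPrimitive.Int.irreducible_iff_irreducible_map_cast hprim, hmap]
    exact hassoc.irreducible hirrQ
  · rw [hmin, Polynomial.natDegree_X_pow_sub_C]
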